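/- Let x : [0, ∞) → ℝ² be a continuous curve with x(t) ∈ Cone(a, g, r) for all t ≥ 0 (where a = x(0), 0 < r < ‖g − a‖), such that ‖x(t) − g‖ is nonincreasing and x(t) → g as t → ∞. Then x(t) ∈ IC(a, g, r) = conv({a} ∪ B(g, r)) for all t ≥ 0. -/

import Mathlib

open Real Metric Set
open scoped RealInnerProductSpace

noncomputable section

abbrev E2 := EuclideanSpace ℝ (Fin 2)

/-- Unit forward direction vector of orientation `θ`. -/
def uvec (θ : ℝ) : E2 := !₂[Real.cos θ, Real.sin θ]

/-- Unit normal (perpendicular) vector of orientation `θ`. -/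
def nvec (θ : ℝ) : E2 := !₂[-Real.sin θ, Real.cos θ]

/-- Two-argument arctangent, `atan2 y x`. -/
def atan2 (y x : ℝ) : ℝ := Complex.arg (x + y * Complex.I)

/-- The (unbounded) cone with apex `a`, base point `b`, and base radius `r`. -/
def cone (a b : E2) (r : ℝ) : Set E2 :=
  {p | ∃ α : ℝ, 0 ≤ α ∧ ∃ z ∈ closedBall b r, p = a + α • (z - a)}

/-- The half-plane bounded at `a` pointing towards `b`. -/
def hplane (a b : E2) : Set E2 := {z | 0 ≤ ⟪b - a, z - a⟫}

/-- The bounded ice-cream cone with apex `a`, base point `b`, and radius `r`. -/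
def icone (a b : E2) (r : ℝ) : Set E2 := convexHull ℝ ({a} ∪ closedBall b r)

/-- A continuous curve that starts at the apex, stays in the cone, has
nonincreasing distance to the goal, and converges to the goal remains inside
the bounded ice-cream cone. -/
lemma core_aux (a g : E2) (r : ℝ) (h0 : 0 < r) (h1 : r < ‖g - a‖) {p : E2}
    (hp : p ∈ cone a g r) :
    0 ≤ ⟪g - a, p - a⟫ ∧ ‖p - a‖ ^ 2 * (‖g - a‖ ^ 2 - r ^ 2) ≤ ⟪g - a, p - a⟫ ^ 2 := by
  obtain ⟨α, hα, z, hz, rfl⟩ := hp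
  have hza : a + α • (z - a) - a = α • (z - a) := by abel
  rw [hza]
  rw [mem_closedBall, dist_eq_norm] at hz
  set I : ℝ := ⟪g - a, z - g⟫ with hIdef
  have hzg : z - a = (z - g) + (g - a) := by abel
  have hinner : ⟪g - a, z - a⟫ = I + ‖g - a‖ ^ 2 := by
    rw [hzg, inner_add_right, real_inner_self_eq_norm_sq]
  have hnorm : ‖z - a‖ ^ 2 = ‖z - g‖ ^ 2 + 2 * I + ‖g - a‖ ^ 2 := by
    rw [hzg, norm_add_sq_real, real_inner_comm]
  have hCS : -(‖g - a‖ * ‖z - g‖) ≤ I :=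
    neg_le_of_abs_le (abs_real_inner_le_norm _ _)
  have hd : 0 < ‖g - a‖ := h0.trans h1
  have hIpos : 0 < I + ‖g - a‖ ^ 2 := by nlinarith [norm_nonneg (z - g)]
  have e1 : ⟪g - a, α • (z - a)⟫ = α * (I + ‖g - a‖ ^ 2) := by
    rw [real_inner_smul_right, hinner]
  have e2 : ‖α • (z - a)‖ ^ 2 = α ^ 2 * (‖z - g‖ ^ 2 + 2 * I + ‖g - a‖ ^ 2) := by
    rw [norm_smul, mul_pow, ← hnorm, Real.norm_eq_abs, sq_abs]
  refine ⟨by rw [e1]; exact mul_nonneg hα hIpos.le, ?_⟩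
  rw [e1, e2]
  have hZ : ‖z - g‖ ^ 2 ≤ r ^ 2 := by nlinarith [norm_nonneg (z - g)]
  nlinarith [mul_nonneg (sq_nonneg α) (sq_nonneg (I + r ^ 2)),
    mul_nonneg (sq_nonneg α) (mul_nonneg (by linarith : (0:ℝ) ≤ r ^ 2 - ‖z - g‖ ^ 2)
      (by nlinarith : (0:ℝ) ≤ ‖g - a‖ ^ 2 - r ^ 2))]

lemma icone_of_le (a g : E2) (r : ℝ) (h0 : 0 < r) (h1 : r < ‖g - a‖) {p : E2}
    (hp : p ∈ cone a g r) (hψ : ⟪g - a, p - a⟫ ≤ ‖g - a‖ ^ 2 - r ^ 2) :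
    p ∈ icone a g r := by
  obtain ⟨hψ0, hkey⟩ := core_aux a g r h0 h1 hp
  have hd : 0 < ‖g - a‖ := h0.trans h1
  set c : ℝ := ‖g - a‖ ^ 2 - r ^ 2 with hc
  have hcpos : 0 < c := by nlinarith
  set ψ : ℝ := ⟪g - a, p - a⟫ with hψdef
  set β : ℝ := ψ / c with hβ
  have hβ0 : 0 ≤ β := div_nonneg hψ0 hcpos.le
  have hβ1 : β ≤ 1 := (div_le_one hcpos).2 hψ
  rcases eq_or_lt_of_le hβ0 with h | h
  · have hψβ : ψ = β * c := by rw [hβ, div_mul_cancel₀ _ hcpos.ne']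
    have hψz : ψ = 0 := by rw [hψβ, ← h, zero_mul]
    have hpz : ‖p - a‖ ^ 2 ≤ 0 := by nlinarith
    have : p = a := by
      have : ‖p - a‖ = 0 := by nlinarith [norm_nonneg (p - a), sq_nonneg ‖p - a‖]
      have := norm_sub_eq_zero_iff.mp this; exact this
    rw [this]
    exact subset_convexHull ℝ _ (Or.inl rfl)
  · set z' : E2 := a + β⁻¹ • (p - a) with hz'def
    have hVc : ‖p - a‖ ^ 2 ≤ β ^ 2 * c := by
      have : ψ = β * c := by rw [hβ, div_mul_cancel₀ _ hcpos.ne']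
      nlinarith
    have hnormsub : ‖(p - a) - β • (g - a)‖ ^ 2 ≤ (β * r) ^ 2 := by
      rw [norm_sub_sq_real, real_inner_smul_right, norm_smul, Real.norm_eq_abs]
      have : (|β| * ‖g - a‖) ^ 2 = β ^ 2 * ‖g - a‖ ^ 2 := by
        rw [mul_pow, sq_abs]
      rw [this, real_inner_comm]
      have hψβ : ψ = β * c := by rw [hβ, div_mul_cancel₀ _ hcpos.ne']
      have hψi : ψ = ⟪g - a, p - a⟫ := hψdef
      nlinarith [hψβ, hVc, hc, sq_nonneg β]
    have hle : ‖(p - a) - β • (g - a)‖ ≤ β * r := by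
      have h1' : 0 ≤ β * r := mul_nonneg hβ0 h0.le
      nlinarith [norm_nonneg ((p - a) - β • (g - a))]
    have hz' : z' ∈ closedBall g r := by
      rw [mem_closedBall, dist_eq_norm]
      have expand : z' - g = β⁻¹ • ((p - a) - β • (g - a)) := by
        rw [smul_sub, smul_smul, inv_mul_cancel₀ h.ne', one_smul, hz'def]; abel
      rw [expand, norm_smul, Real.norm_eq_abs, abs_of_pos (inv_pos.2 h)]
      calc β⁻¹ * ‖(p - a) - β • (g - a)‖ ≤ β⁻¹ * (β * r) := by
            exact mul_le_mul_of_nonneg_left hle (inv_pos.2 h).le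
        _ = r := by field_simp
    have hcomb : (1 - β) • a + β • z' = p := by
      rw [hz'def, smul_add, smul_smul, mul_inv_cancel₀ h.ne', one_smul]
      module
    have hseg : p ∈ segment ℝ a z' := ⟨1 - β, β, by linarith, hβ0, by ring, hcomb⟩
    exact segment_subset_convexHull (s := {a} ∪ closedBall g r)
      (mem_union_left _ rfl) (mem_union_right _ hz') hseg

lemma sphere_case (a g : E2) (r : ℝ) (h0 : 0 < r) (h1 : r < ‖g - a‖) {p : E2}
    (hp : p ∈ cone a g r) (hψ : ⟪g - a, p - a⟫ = ‖g - a‖ ^ 2 - r ^ 2) :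
    ‖p - g‖ ≤ r := by
  obtain ⟨hψ0, hkey⟩ := core_aux a g r h0 h1 hp
  have hd : 0 < ‖g - a‖ := h0.trans h1
  have hcpos : 0 < ‖g - a‖ ^ 2 - r ^ 2 := by nlinarith
  have hV : ‖p - a‖ ^ 2 ≤ ‖g - a‖ ^ 2 - r ^ 2 := by nlinarith
  have hexp : ‖p - g‖ ^ 2 = ‖p - a‖ ^ 2 - 2 * ⟪g - a, p - a⟫ + ‖g - a‖ ^ 2 := by
    have : p - g = (p - a) - (g - a) := by abel
    rw [this, norm_sub_sq_real, real_inner_comm]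
  have hsq : ‖p - g‖ ^ 2 ≤ r ^ 2 := by rw [hexp, hψ]; nlinarith
  nlinarith [norm_nonneg (p - g)]

theorem stmt_13 (a g : E2) (r : ℝ) (h0 : 0 < r) (h1 : r < ‖g - a‖)
    (x : ℝ → E2) (hx0 : x 0 = a)
    (hcont : ContinuousOn x (Set.Ici 0))
    (hcone : ∀ t, 0 ≤ t → x t ∈ cone a g r)
    (hmono : AntitoneOn (fun t => ‖x t - g‖) (Set.Ici 0))
    (hlim : Filter.Tendsto x Filter.atTop (nhds g)) :
    ∀ t, 0 ≤ t → x t ∈ icone a g r := by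
  intro t₀ ht₀
  by_contra hout
  have hd : 0 < ‖g - a‖ := h0.trans h1
  set c : ℝ := ‖g - a‖ ^ 2 - r ^ 2 with hc
  have hcpos : 0 < c := by nlinarith
  set ψ : ℝ → ℝ := fun t => ⟪g - a, x t - a⟫ with hψdef
  -- ψ t₀ > c
  have hψt₀ : c < ψ t₀ := by
    by_contra hle
    exact hout (icone_of_le a g r h0 h1 (hcone t₀ ht₀) (le_of_not_gt hle))
  -- the curve starts with ψ 0 = 0
  have hψ0 : ψ 0 = 0 := by
    simp [hψdef, hx0, inner_sub_right]
  -- continuity of ψ on Icc 0 t₀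
  have hsub : Icc (0:ℝ) t₀ ⊆ Ici (0:ℝ) := fun t ht => ht.1
  have hψcont : ContinuousOn ψ (Icc 0 t₀) := by
    have : Continuous fun p : E2 => ⟪g - a, p - a⟫ :=
      continuous_const.inner (continuous_id.sub continuous_const)
    exact this.comp_continuousOn (hcont.mono hsub)
  -- the crossing set
  set S : Set ℝ := Icc 0 t₀ ∩ ψ ⁻¹' (Iic c) with hS
  have hS0 : (0:ℝ) ∈ S := ⟨⟨le_refl 0, ht₀⟩, by simp [hψ0]; linarith⟩
  have hSne : S.Nonempty := ⟨0, hS0⟩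
  have hSbdd : BddAbove S := ⟨t₀, fun t ht => ht.1.2⟩
  have hSclosed : IsClosed S :=
    hψcont.preimage_isClosed_of_isClosed isClosed_Icc isClosed_Iic
  set τ : ℝ := sSup S with hτ
  have hτS : τ ∈ S := hSclosed.csSup_mem hSne hSbdd
  have hτ0 : 0 ≤ τ := hτS.1.1
  have hτt₀ : τ ≤ t₀ := hτS.1.2
  have hψτ : ψ τ ≤ c := hτS.2
  have hτlt : τ < t₀ := by
    rcases lt_or_eq_of_le hτt₀ with h | h
    · exact h
    · exfalso; rw [h] at hψτ; linarith
  -- for t in (τ, t₀], ψ t > c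
  have hgt : ∀ t, τ < t → t ≤ t₀ → c < ψ t := by
    intro t h1t h2t
    by_contra hle
    have : t ∈ S := ⟨⟨le_trans hτ0 h1t.le, h2t⟩, le_of_not_gt hle⟩
    exact absurd (le_csSup hSbdd this) (not_le.2 h1t)
  -- ψ τ ≥ c by continuity from the right
  have hψτge : c ≤ ψ τ := by
    by_contra hlt
    push_neg at hlt
    have hcw : ContinuousWithinAt ψ (Icc 0 t₀) τ := hψcont τ ⟨hτ0, hτt₀⟩
    rw [Metric.continuousWithinAt_iff] at hcw
    obtain ⟨δ, hδ, hδ'⟩ := hcw (c - ψ τ) (by linarith)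
    set t : ℝ := min t₀ (τ + δ / 2) with ht
    have htτ : τ < t := lt_min hτlt (by linarith)
    have htt₀ : t ≤ t₀ := min_le_left _ _
    have htmem : t ∈ Icc (0:ℝ) t₀ := ⟨le_trans hτ0 htτ.le, htt₀⟩
    have hdist : dist t τ < δ := by
      rw [Real.dist_eq, abs_of_pos (by linarith : 0 < t - τ)]
      have : t ≤ τ + δ / 2 := min_le_right _ _
      linarith
    have := hδ' htmem hdist
    rw [Real.dist_eq] at this
    have h2 := hgt t htτ htt₀
    have := abs_lt.mp this
    linarith
  have hψτeq : ψ τ = c := le_antisymm hψτ hψτge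
  -- so x τ is within distance r of g
  have hxr : ‖x τ - g‖ ≤ r := sphere_case a g r h0 h1 (hcone τ hτ0) hψτeq
  -- monotonicity gives ‖x t₀ - g‖ ≤ r, so x t₀ ∈ icone, contradiction
  have hmle : ‖x t₀ - g‖ ≤ ‖x τ - g‖ := hmono hτ0 (le_trans hτ0 hτt₀) hτt₀
  have : x t₀ ∈ closedBall g r := by
    rw [mem_closedBall, dist_eq_norm]; linarith
  exact hout (subset_convexHull ℝ _ (Or.inr this))
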